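/- On a path with n' agents, for a sequence of rational swaps whose final assignment σ_t satisfies σ_t^T(o_1) = k and σ_t^T(o_{n'}) = k-1, and for objects o_a, o_b with a < b, a' > a, b' < b, and intersecting trajectories, setting c = a' + b' - k + 1: every agent q with max(a,b') ≤ q < c strictly prefers o_b to o_a, and every agent q with c ≤ q ≤ min(a',b) strictly prefers o_a to o_b. -/

import Mathlib

/-- An assignment maps agents to objects bijectively (agents and objects are both `Fin n`;
object `o_i` is identified with index `i`, agent `i` initially holds `o_i`). -/
abbrev Assignment (n : ℕ) := Equiv.Perm (Fin n)

/-- `u j o` is agent `j`'s utility for object `o`; strict linear preferences mean each `u j`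
is injective, and `o ≻_j o'` iff `u j o > u j o'`. -/
def StrictPref {n : ℕ} (u : Fin n → Fin n → ℕ) : Prop := ∀ j, Function.Injective (u j)

/-- A rational swap under strict preferences: two adjacent agents exchange objects, each
strictly preferring the object received. -/
def SwapStep {n : ℕ} (adj : Fin n → Fin n → Prop) (u : Fin n → Fin n → ℕ)
    (σ σ' : Assignment n) : Prop :=
  ∃ a b : Fin n, adj a b ∧ u a (σ b) > u a (σ a) ∧ u b (σ a) > u b (σ b) ∧
    σ' = σ * Equiv.swap a b

/-- `σseq 0, σseq 1, …, σseq t` is a sequence of swaps. -/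
def SwapSeq {n : ℕ} (adj : Fin n → Fin n → Prop) (u : Fin n → Fin n → ℕ)
    (σseq : ℕ → Assignment n) (t : ℕ) : Prop :=
  ∀ m < t, SwapStep adj u (σseq m) (σseq (m + 1))

/-- Adjacency of the path `0 – 1 – ⋯ – (n-1)`. -/
def pathAdj {n : ℕ} (i j : Fin n) : Prop := i.val + 1 = j.val ∨ j.val + 1 = i.val

namespace CSP

/-- Generic discrete IVT (upward). -/
lemma ivt_up (f : ℕ → ℕ) (r1 : ℕ) :
    ∀ r2, r1 ≤ r2 → (∀ m, r1 ≤ m → m < r2 → f (m+1) ≤ f m + 1) →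
    ∀ h, f r1 ≤ h → h ≤ f r2 → ∃ r, r1 ≤ r ∧ r ≤ r2 ∧ f r = h := by
  intro r2 h12
  induction r2, h12 using Nat.le_induction with
  | base => intro _ h h1 h2; exact ⟨r1, le_refl _, le_refl _, by omega⟩
  | succ r2 hr2 ih =>
    intro hstep h h1 h2
    by_cases hc : h ≤ f r2
    · obtain ⟨r, hr1, hr2', hfr⟩ := ih (fun m hm hm' => hstep m hm (by omega)) h h1 hc
      exact ⟨r, hr1, by omega, hfr⟩
    · push_neg at hc
      have := hstep r2 hr2 (by omega)
      exact ⟨r2+1, by omega, le_refl _, by omega⟩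

/-- Generic discrete IVT (downward). -/
lemma ivt_down (f : ℕ → ℕ) (r1 : ℕ) :
    ∀ r2, r1 ≤ r2 → (∀ m, r1 ≤ m → m < r2 → f m ≤ f (m+1) + 1) →
    ∀ h, h ≤ f r1 → f r2 ≤ h → ∃ r, r1 ≤ r ∧ r ≤ r2 ∧ f r = h := by
  intro r2 h12
  induction r2, h12 using Nat.le_induction with
  | base => intro _ h h1 h2; exact ⟨r1, le_refl _, le_refl _, by omega⟩
  | succ r2 hr2 ih =>
    intro hstep h h1 h2
    by_cases hc : f r2 ≤ h
    · obtain ⟨r, hr1, hr2', hfr⟩ := ih (fun m hm hm' => hstep m hm (by omega)) h h1 hc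
      exact ⟨r, hr1, by omega, hfr⟩
    · push_neg at hc
      have := hstep r2 hr2 (by omega)
      exact ⟨r2+1, by omega, le_refl _, by omega⟩

/-- Somewhere a decidable property switches off. -/
lemma exists_change (Q : ℕ → Prop) (r1 : ℕ) :
    ∀ r2, r1 ≤ r2 → Q r1 → ¬ Q r2 → ∃ s, r1 ≤ s ∧ s < r2 ∧ Q s ∧ ¬ Q (s+1) := by
  intro r2 h12
  induction r2, h12 using Nat.le_induction with
  | base => intro h1 h2; exact absurd h1 h2
  | succ r2 hr2 ih =>
    intro h1 h2
    by_cases hc : Q r2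
    · exact ⟨r2, hr2, by omega, hc, h2⟩
    · obtain ⟨s, hs1, hs2, hs3, hs4⟩ := ih h1 hc
      exact ⟨s, hs1, by omega, hs3, hs4⟩

/-- A function that strictly decreases over an interval strictly decreases at some step. -/
lemma exists_dec (f : ℕ → ℕ) (r1 : ℕ) :
    ∀ r2, r1 ≤ r2 → f r2 < f r1 → ∃ r, r1 ≤ r ∧ r < r2 ∧ f (r+1) < f r := by
  intro r2 h12
  induction r2, h12 using Nat.le_induction with
  | base => intro h; omega
  | succ r2 hr2 ih =>
    intro h
    by_cases hc : f (r2+1) < f r2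
    · exact ⟨r2, hr2, by omega, hc⟩
    · obtain ⟨r, hr1, hr2', hfr⟩ := ih (by omega)
      exact ⟨r, hr1, by omega, hfr⟩

lemma exists_inc (f : ℕ → ℕ) (r1 : ℕ) :
    ∀ r2, r1 ≤ r2 → f r1 < f r2 → ∃ r, r1 ≤ r ∧ r < r2 ∧ f r < f (r+1) := by
  intro r2 h12
  induction r2, h12 using Nat.le_induction with
  | base => intro h; omega
  | succ r2 hr2 ih =>
    intro h
    by_cases hc : f r2 < f (r2+1)
    · exact ⟨r2, hr2, by omega, hc⟩
    · obtain ⟨r, hr1, hr2', hfr⟩ := ih (by omega)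
      exact ⟨r, hr1, by omega, hfr⟩

structure Ctx (n : ℕ) where
  hn : 0 < n
  u : Fin n → Fin n → ℕ
  t : ℕ
  σ : ℕ → Assignment n
  hu : StrictPref u
  hseq : SwapSeq pathAdj u σ t
  h0 : σ 0 = 1

variable {n : ℕ}

/-- position of object `x` at time `s`. -/
def Ctx.P (S : Ctx n) (s : ℕ) (x : Fin n) : ℕ := ((S.σ s)⁻¹ x).val

lemma Ctx.P_lt (S : Ctx n) (s : ℕ) (x : Fin n) : S.P s x < n := ((S.σ s)⁻¹ x).isLt

lemma Ctx.P0 (S : Ctx n) (x : Fin n) : S.P 0 x = x.val := by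
  simp [Ctx.P, S.h0]

lemma Ctx.P_inj (S : Ctx n) {s : ℕ} {x y : Fin n} (h : S.P s x = S.P s y) : x = y := by
  have := Fin.ext h
  exact (S.σ s)⁻¹.injective this

lemma Ctx.step (S : Ctx n) {m : ℕ} (hm : m < S.t) :
    ∃ α β : Fin n, α.val + 1 = β.val ∧ S.σ (m+1) = S.σ m * Equiv.swap α β ∧
      S.u α (S.σ m β) > S.u α (S.σ m α) ∧ S.u β (S.σ m α) > S.u β (S.σ m β) := by
  obtain ⟨a, b, hadj, h1, h2, heq⟩ := S.hseq m hm
  rcases hadj with h | h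
  · exact ⟨a, b, h, heq, h1, h2⟩
  · exact ⟨b, a, h, by rw [heq, Equiv.swap_comm], h2, h1⟩

lemma Ctx.inv_step (S : Ctx n) {m : ℕ} {α β : Fin n}
    (heq : S.σ (m+1) = S.σ m * Equiv.swap α β) (x : Fin n) :
    (S.σ (m+1))⁻¹ x = Equiv.swap α β ((S.σ m)⁻¹ x) := by
  rw [heq, mul_inv_rev, Equiv.Perm.mul_apply, Equiv.swap_inv]

/-- the object occupying x's old position after step m. -/
def Ctx.mate (S : Ctx n) (m : ℕ) (x : Fin n) : Fin n := S.σ (m+1) ((S.σ m)⁻¹ x)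

lemma Ctx.mate_pos (S : Ctx n) {m : ℕ} (hm : m < S.t) (x : Fin n)
    (hmove : S.P (m+1) x ≠ S.P m x) :
    S.P m (S.mate m x) = S.P (m+1) x ∧ S.P (m+1) (S.mate m x) = S.P m x ∧ S.mate m x ≠ x := by
  obtain ⟨α, β, hαβ, heq, -, -⟩ := S.step hm
  set i := (S.σ m)⁻¹ x with hi
  have h1 : (S.σ (m+1))⁻¹ x = Equiv.swap α β i := S.inv_step heq x
  have hmate : S.mate m x = S.σ m (Equiv.swap α β i) := by
    rw [Ctx.mate, heq]; rfl
  have h2 : (S.σ m)⁻¹ (S.mate m x) = Equiv.swap α β i := by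
    rw [hmate]; exact (S.σ m).symm_apply_apply _
  have h3 : (S.σ (m+1))⁻¹ (S.mate m x) = i := by
    rw [S.inv_step heq, h2, Equiv.swap_apply_self]
  have c1 : S.P m (S.mate m x) = S.P (m+1) x := by rw [Ctx.P, h2, ← h1]; rfl
  have c2 : S.P (m+1) (S.mate m x) = S.P m x := by rw [Ctx.P, h3]; rfl
  refine ⟨c1, c2, fun hcon => ?_⟩
  rw [hcon] at c1
  exact hmove c1.symm

lemma Ctx.movers (S : Ctx n) {m : ℕ} (hm : m < S.t) {x z : Fin n}
    (hx : S.P (m+1) x ≠ S.P m x) (hz : S.P (m+1) z ≠ S.P m z) (hzx : z ≠ x) :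
    z = S.mate m x := by
  obtain ⟨α, β, hαβ, heq, -, -⟩ := S.step hm
  have hαβ' : α ≠ β := by intro h; rw [h] at hαβ; omega
  have key : ∀ w : Fin n, S.P (m+1) w ≠ S.P m w → (S.σ m)⁻¹ w = α ∨ (S.σ m)⁻¹ w = β := by
    intro w hw
    by_contra hcon
    push_neg at hcon
    apply hw
    rw [Ctx.P, Ctx.P, S.inv_step heq, Equiv.swap_apply_of_ne_of_ne hcon.1 hcon.2]
  have hmx : S.mate m x = S.σ m (Equiv.swap α β ((S.σ m)⁻¹ x)) := by
    rw [Ctx.mate, heq]; rfl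
  have hix := key x hx
  have hiz := key z hz
  have hne : (S.σ m)⁻¹ z ≠ (S.σ m)⁻¹ x := fun h => hzx ((S.σ m)⁻¹.injective h)
  rcases hix with h1 | h1 <;> rcases hiz with h2 | h2
  · rw [h1] at hne; rw [h2] at hne; exact absurd rfl hne
  · have : z = S.σ m β := by rw [← h2]; exact ((S.σ m).apply_symm_apply z).symm
    rw [this, hmx, h1, Equiv.swap_apply_left]
  · have : z = S.σ m α := by rw [← h2]; exact ((S.σ m).apply_symm_apply z).symm
    rw [this, hmx, h1, Equiv.swap_apply_right]
  · rw [h1] at hne; rw [h2] at hne; exact absurd rfl hne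

lemma Ctx.pstep (S : Ctx n) {m : ℕ} (hm : m < S.t) (x : Fin n) :
    S.P (m+1) x ≤ S.P m x + 1 ∧ S.P m x ≤ S.P (m+1) x + 1 := by
  obtain ⟨α, β, hαβ, heq, -, -⟩ := S.step hm
  have h1 : (S.σ (m+1))⁻¹ x = Equiv.swap α β ((S.σ m)⁻¹ x) := S.inv_step heq x
  set i := (S.σ m)⁻¹ x with hi
  rcases eq_or_ne i α with h | h
  · rw [Ctx.P, Ctx.P, h1, ← hi, h, Equiv.swap_apply_left]; omega
  rcases eq_or_ne i β with h' | h'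
  · rw [Ctx.P, Ctx.P, h1, ← hi, h', Equiv.swap_apply_right]; omega
  · rw [Ctx.P, Ctx.P, h1, ← hi, Equiv.swap_apply_of_ne_of_ne h h']; omega

/-- utility of an agent's held object is monotone in time. -/
lemma Ctx.umono (S : Ctx n) (q : Fin n) {r1 : ℕ} :
    ∀ r2, r1 ≤ r2 → r2 ≤ S.t → S.u q (S.σ r1 q) ≤ S.u q (S.σ r2 q) := by
  intro r2 h12
  induction r2, h12 using Nat.le_induction with
  | base => intro _; exact le_refl _
  | succ r2 hr2 ih =>
    intro hr2t
    have hstep := S.step (show r2 < S.t by omega)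
    obtain ⟨α, β, hαβ, heq, hα, hβ⟩ := hstep
    have hprev := ih (by omega)
    have hnew : S.σ (r2+1) q = S.σ r2 (Equiv.swap α β q) := by rw [heq]; rfl
    rcases eq_or_ne q α with h | h
    · subst h; rw [hnew, Equiv.swap_apply_left]; omega
    rcases eq_or_ne q β with h' | h'
    · subst h'; rw [hnew, Equiv.swap_apply_right]; omega
    · rw [hnew, Equiv.swap_apply_of_ne_of_ne h h']; exact hprev

/-- if agent holds `x` then later `y ≠ x`, it prefers `y`. -/
lemma Ctx.hold_lt (S : Ctx n) {r1 r2 : ℕ} {x y : Fin n} (h12 : r1 ≤ r2) (h2t : r2 ≤ S.t)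
    (hxy : x ≠ y) (hagents : (S.σ r1)⁻¹ x = (S.σ r2)⁻¹ y) :
    S.u ((S.σ r2)⁻¹ y) x < S.u ((S.σ r2)⁻¹ y) y := by
  set q := (S.σ r2)⁻¹ y with hq
  have e1 : S.σ r1 q = x := by rw [← hagents]; exact (S.σ r1).apply_symm_apply x
  have e2 : S.σ r2 q = y := (S.σ r2).apply_symm_apply y
  have hmono := S.umono q r2 h12 h2t
  rw [e1, e2] at hmono
  rcases lt_or_eq_of_le hmono with h | h
  · exact h
  · exact absurd (S.hu q h) hxy


lemma Ctx.agents_eq (S : Ctx n) {s1 s2 : ℕ} {x y : Fin n} (h : S.P s1 x = S.P s2 y) :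
    (S.σ s1)⁻¹ x = (S.σ s2)⁻¹ y := Fin.ext h

lemma Ctx.ivtU (S : Ctx n) {r1 r2 : ℕ} (h12 : r1 ≤ r2) (h2t : r2 ≤ S.t) (x : Fin n) {h : ℕ}
    (h1 : S.P r1 x ≤ h) (h2 : h ≤ S.P r2 x) : ∃ r, r1 ≤ r ∧ r ≤ r2 ∧ S.P r x = h :=
  ivt_up (fun s => S.P s x) r1 r2 h12
    (fun m _ hm => (S.pstep (by omega) x).1) h h1 h2

lemma Ctx.ivtD (S : Ctx n) {r1 r2 : ℕ} (h12 : r1 ≤ r2) (h2t : r2 ≤ S.t) (x : Fin n) {h : ℕ}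
    (h1 : h ≤ S.P r1 x) (h2 : S.P r2 x ≤ h) : ∃ r, r1 ≤ r ∧ r ≤ r2 ∧ S.P r x = h :=
  ivt_down (fun s => S.P s x) r1 r2 h12
    (fun m _ hm => (S.pstep (by omega) x).2) h h1 h2

/-- structure of a crossing event. -/
lemma Ctx.cross (S : Ctx n) {m : ℕ} {x y : Fin n} (hm : m < S.t)
    (hbef : S.P m x < S.P m y) (haft : S.P (m+1) y ≤ S.P (m+1) x) :
    S.P m y = S.P m x + 1 ∧ S.P (m+1) x = S.P m x + 1 ∧ S.P (m+1) y = S.P m x ∧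
    S.u ((S.σ m)⁻¹ x) y > S.u ((S.σ m)⁻¹ x) x ∧
    S.u ((S.σ m)⁻¹ y) x > S.u ((S.σ m)⁻¹ y) y := by
  obtain ⟨α, β, hαβ, heq, hα, hβ⟩ := S.step hm
  have hx1 : (S.σ (m+1))⁻¹ x = Equiv.swap α β ((S.σ m)⁻¹ x) := S.inv_step heq x
  have hy1 : (S.σ (m+1))⁻¹ y = Equiv.swap α β ((S.σ m)⁻¹ y) := S.inv_step heq y
  have hPx : S.P m x = ((S.σ m)⁻¹ x).val := rfl
  have hPy : S.P m y = ((S.σ m)⁻¹ y).val := rfl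
  have hij : (S.σ m)⁻¹ x ≠ (S.σ m)⁻¹ y := by
    intro h; rw [hPx, hPy, h] at hbef; omega
  have hxval : S.P (m+1) x = (Equiv.swap α β ((S.σ m)⁻¹ x)).val := by rw [Ctx.P, hx1]
  have hyval : S.P (m+1) y = (Equiv.swap α β ((S.σ m)⁻¹ y)).val := by rw [Ctx.P, hy1]
  have main : (S.σ m)⁻¹ x = α ∧ (S.σ m)⁻¹ y = β := by
    rcases eq_or_ne ((S.σ m)⁻¹ x) α with hiα | hiα
    · rcases eq_or_ne ((S.σ m)⁻¹ y) β with hjβ | hjβ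
      · exact ⟨hiα, hjβ⟩
      · exfalso
        rcases eq_or_ne ((S.σ m)⁻¹ y) α with hjα | hjα
        · rw [hiα, hjα] at hij; exact hij rfl
        · rw [hiα, Equiv.swap_apply_left] at hxval
          rw [Equiv.swap_apply_of_ne_of_ne hjα hjβ] at hyval
          rw [hPx, hPy, hiα] at hbef
          have hyβ : ((S.σ m)⁻¹ y).val ≠ β.val := fun h => hjβ (Fin.ext h)
          omega
    · exfalso
      rcases eq_or_ne ((S.σ m)⁻¹ x) β with hiβ | hiβ
      · rw [hiβ, Equiv.swap_apply_right] at hxval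
        rw [hPx, hPy, hiβ] at hbef
        rcases eq_or_ne ((S.σ m)⁻¹ y) α with hjα | hjα
        · rw [hjα] at hbef; omega
        rcases eq_or_ne ((S.σ m)⁻¹ y) β with hjβ | hjβ
        · rw [hiβ, hjβ] at hij; exact hij rfl
        · rw [Equiv.swap_apply_of_ne_of_ne hjα hjβ] at hyval
          omega
      · rw [Equiv.swap_apply_of_ne_of_ne hiα hiβ] at hxval
        rw [hPx, hPy] at hbef
        have hxiv : ((S.σ m)⁻¹ x).val ≠ α.val := fun h => hiα (Fin.ext h)
        have hxiv2 : ((S.σ m)⁻¹ x).val ≠ β.val := fun h => hiβ (Fin.ext h)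
        rcases eq_or_ne ((S.σ m)⁻¹ y) α with hjα | hjα
        · rw [hjα, Equiv.swap_apply_left] at hyval; rw [hjα] at hbef; omega
        rcases eq_or_ne ((S.σ m)⁻¹ y) β with hjβ | hjβ
        · rw [hjβ, Equiv.swap_apply_right] at hyval; rw [hjβ] at hbef; omega
        · rw [Equiv.swap_apply_of_ne_of_ne hjα hjβ] at hyval; omega
  obtain ⟨hiα, hjβ⟩ := main
  rw [hiα, Equiv.swap_apply_left] at hxval
  rw [hjβ, Equiv.swap_apply_right] at hyval
  have e1 : S.σ m α = x := by rw [← hiα]; exact (S.σ m).apply_symm_apply x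
  have e2 : S.σ m β = y := by rw [← hjβ]; exact (S.σ m).apply_symm_apply y
  rw [e1, e2] at hα hβ
  refine ⟨?_, ?_, ?_, ?_, ?_⟩
  · rw [hPx, hPy, hiα, hjβ]; exact hαβ.symm
  · rw [hxval, hPx, hiα]; exact hαβ.symm
  · rw [hyval, hPx, hiα]
  · rw [hiα]; exact hα
  · rw [hjβ]; exact hβ

/-- after a crossing, the order stays flipped forever. -/
lemma Ctx.after_cross (S : Ctx n) {m1 : ℕ} {x y : Fin n} (hm1 : m1 < S.t)
    (hbef : S.P m1 x < S.P m1 y) (haft : S.P (m1+1) y ≤ S.P (m1+1) x) :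
    ∀ m, m1 < m → m ≤ S.t → S.P m y < S.P m x := by
  have hxy : x ≠ y := fun h => by rw [h] at hbef; omega
  obtain ⟨hc1, hc2, hc3, hpx, hpy⟩ := S.cross hm1 hbef haft
  by_contra hcon
  push_neg at hcon
  obtain ⟨m2, hm2gt, hm2le, hm2ge⟩ := hcon
  have hQm2 : S.P m2 x < S.P m2 y := by
    rcases lt_or_eq_of_le hm2ge with h | h
    · exact h
    · exact absurd (S.P_inj h.symm).symm hxy
  have hm2ne : m2 ≠ m1 + 1 := by intro h; subst h; omega
  have hstart : S.P (m1+1) y < S.P (m1+1) x := by omega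
  obtain ⟨s, hs1, hs2, hQs, hQs1⟩ := exists_change (fun m => S.P m y < S.P m x) (m1+1) m2
    (by omega) hstart (by omega)
  have hslt : s < S.t := by omega
  have hsev : S.P (s+1) x ≤ S.P (s+1) y := by
    push_neg at hQs1; exact hQs1
  obtain ⟨hd1, hd2, hd3, hqx, hqy⟩ := S.cross hslt hQs hsev
  -- δ = P s y ; x at δ+1
  rcases Nat.lt_trichotomy (S.P s y) (S.P m1 x) with hδ | hδ | hδ
  · -- δ < π : x visits π within [m1+1, s]
    obtain ⟨r, hr1, hr2, hr3⟩ := S.ivtD (show m1+1 ≤ s by omega) (by omega) x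
      (h := S.P m1 x) (by omega) (by omega)
    have hagents : (S.σ (m1+1))⁻¹ y = (S.σ r)⁻¹ x := S.agents_eq (by omega)
    have := S.hold_lt (x := y) (y := x) hr1 (by omega) (Ne.symm hxy) hagents
    have hsame : (S.σ r)⁻¹ x = (S.σ m1)⁻¹ x := S.agents_eq (by omega)
    rw [hsame] at this
    omega
  · -- δ = π : same agent reveals both preferences
    have hsame : (S.σ s)⁻¹ y = (S.σ m1)⁻¹ x := S.agents_eq hδ
    rw [hsame] at hqx
    omega
  · -- δ > π : y visits π+1 within [m1+1, s]
    obtain ⟨r, hr1, hr2, hr3⟩ := S.ivtU (show m1+1 ≤ s by omega) (by omega) y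
      (h := S.P m1 x + 1) (by omega) (by omega)
    have hagents : (S.σ (m1+1))⁻¹ x = (S.σ r)⁻¹ y := S.agents_eq (by omega)
    have := S.hold_lt (x := x) (y := y) hr1 (by omega) hxy hagents
    have hsame : (S.σ r)⁻¹ y = (S.σ m1)⁻¹ y := S.agents_eq (by omega)
    rw [hsame] at this
    omega

/-- extract a first crossing on an interval. -/
lemma Ctx.first_flip (S : Ctx n) {r1 r2 : ℕ} {x y : Fin n} (h12 : r1 ≤ r2)
    (h1 : S.P r1 x < S.P r1 y) (h2 : S.P r2 y ≤ S.P r2 x) :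
    ∃ s, r1 ≤ s ∧ s < r2 ∧ S.P s x < S.P s y ∧ S.P (s+1) y ≤ S.P (s+1) x := by
  obtain ⟨s, hs1, hs2, hQs, hQs1⟩ := exists_change (fun m => S.P m x < S.P m y) r1 r2
    h12 h1 (by omega)
  exact ⟨s, hs1, hs2, hQs, by push_neg at hQs1; exact hQs1⟩

lemma Ctx.before_cross (S : Ctx n) {m1 : ℕ} {x y : Fin n} (hm1 : m1 < S.t)
    (hbef : S.P m1 x < S.P m1 y) (haft : S.P (m1+1) y ≤ S.P (m1+1) x) :
    ∀ m, m ≤ m1 → S.P m x < S.P m y := by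
  intro m hm
  by_contra hcon
  push_neg at hcon
  rcases eq_or_lt_of_le hm with h | h
  · subst h; omega
  obtain ⟨s, hs1, hs2, hQs, hQs1⟩ := S.first_flip (x := y) (y := x) (le_of_lt h)
    (by
      rcases lt_or_eq_of_le hcon with hh | hh
      · exact hh
      · exact absurd (S.P_inj hh) (fun hc => by rw [hc] at hbef; omega))
    (le_of_lt hbef)
  have := S.after_cross (by omega) hQs hQs1 (m1+1) (by omega) (by omega)
  omega

lemma Ctx.exists_cross (S : Ctx n) {x y : Fin n}
    (h1 : S.P 0 x < S.P 0 y) (h2 : S.P S.t y < S.P S.t x) :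
    ∃ s, s < S.t ∧ S.P s x < S.P s y ∧ S.P (s+1) y ≤ S.P (s+1) x := by
  obtain ⟨s, _, hs2, hQs, hQs1⟩ := S.first_flip (Nat.zero_le S.t) h1 (le_of_lt h2)
  exact ⟨s, hs2, hQs, hQs1⟩

lemma Ctx.order_const (S : Ctx n) {x y : Fin n}
    (h1 : S.P 0 x < S.P 0 y) (h2 : S.P S.t x < S.P S.t y) :
    ∀ m, m ≤ S.t → S.P m x < S.P m y := by
  intro m hm
  by_contra hcon
  push_neg at hcon
  obtain ⟨s, hs1, hs2, hQs, hQs1⟩ := S.first_flip (Nat.zero_le m) h1 hcon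
  have := S.after_cross (by omega) hQs hQs1 S.t (by omega) (le_refl _)
  omega

/-- pinning: after crossing, the objects never return across the crossing boundary. -/
lemma Ctx.pinning (S : Ctx n) {s : ℕ} {x y : Fin n} (hs : s < S.t)
    (hbef : S.P s x < S.P s y) (haft : S.P (s+1) y ≤ S.P (s+1) x) :
    S.P S.t y ≤ S.P s x ∧ S.P s x + 1 ≤ S.P S.t x := by
  have hxy : x ≠ y := fun h => by rw [h] at hbef; omega
  obtain ⟨hc1, hc2, hc3, hpx, hpy⟩ := S.cross hs hbef haft
  constructor
  · by_contra hcon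
    push_neg at hcon
    obtain ⟨r, hr1, hr2, hr3⟩ := S.ivtU (show s+1 ≤ S.t by omega) (le_refl _) y
      (h := S.P s x + 1) (by omega) (by omega)
    have hagents : (S.σ (s+1))⁻¹ x = (S.σ r)⁻¹ y := S.agents_eq (by omega)
    have := S.hold_lt hr1 hr2 hxy hagents
    have hsame : (S.σ r)⁻¹ y = (S.σ s)⁻¹ y := S.agents_eq (by omega)
    rw [hsame] at this
    omega
  · by_contra hcon
    push_neg at hcon
    obtain ⟨r, hr1, hr2, hr3⟩ := S.ivtD (show s+1 ≤ S.t by omega) (le_refl _) x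
      (h := S.P s x) (by omega) (by omega)
    have hagents : (S.σ (s+1))⁻¹ y = (S.σ r)⁻¹ x := S.agents_eq (by omega)
    have := S.hold_lt hr1 hr2 (Ne.symm hxy) hagents
    have hsame : (S.σ r)⁻¹ x = (S.σ s)⁻¹ x := S.agents_eq (by omega)
    rw [hsame] at this
    omega


/-- the object starting at position n-1. -/
def Ctx.Wd (S : Ctx n) : Fin n := ⟨n-1, Nat.sub_lt S.hn Nat.one_pos⟩

section Wall

variable (S : Ctx n) (k : ℕ)

lemma Ctx.W0 : S.P 0 S.Wd = n - 1 := by rw [S.P0]; rfl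

/-- every move of W is a left move; partner exchanges with it. -/
lemma Ctx.Wmove {m : ℕ} (hm : m < S.t) (hmv : S.P (m+1) S.Wd ≠ S.P m S.Wd) :
    S.P m (S.mate m S.Wd) < S.P m S.Wd ∧
    S.P (m+1) S.Wd + 1 = S.P m S.Wd ∧
    S.P m (S.mate m S.Wd) = S.P (m+1) S.Wd ∧
    S.P (m+1) (S.mate m S.Wd) = S.P m S.Wd ∧ S.mate m S.Wd ≠ S.Wd := by
  obtain ⟨c1, c2, hne⟩ := S.mate_pos hm S.Wd hmv
  have hne2 : S.P m (S.mate m S.Wd) ≠ S.P m S.Wd := by rw [c1]; exact hmv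
  rcases Nat.lt_or_ge (S.P m (S.mate m S.Wd)) (S.P m S.Wd) with h | h
  · have hstep := (S.pstep hm S.Wd).2
    refine ⟨h, by omega, c1, c2, hne⟩
  · exfalso
    have hbef : S.P m S.Wd < S.P m (S.mate m S.Wd) := by omega
    have haft : S.P (m+1) (S.mate m S.Wd) ≤ S.P (m+1) S.Wd := by
      rw [c2, ← c1]; omega
    have := S.before_cross hm hbef haft 0 (Nat.zero_le m)
    have h1 : S.P 0 S.Wd = n - 1 := S.W0
    have h2 := (S.mate m S.Wd).isLt
    have h3 : S.P 0 (S.mate m S.Wd) = (S.mate m S.Wd).val := S.P0 _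
    omega

variable (hWt : S.P S.t S.Wd = k - 1) (hk1 : 1 ≤ k) (hkn : k < n)

include hWt hk1 hkn

lemma Ctx.Wpartner_final {m : ℕ} (hm : m < S.t) (hmv : S.P (m+1) S.Wd ≠ S.P m S.Wd) :
    k ≤ S.P S.t (S.mate m S.Wd) ∧ S.P m S.Wd ≤ S.P S.t (S.mate m S.Wd) := by
  obtain ⟨h1, h2, h3, h4, hne⟩ := S.Wmove hm hmv
  have hbef : S.P m (S.mate m S.Wd) < S.P m S.Wd := h1
  have haft : S.P (m+1) S.Wd ≤ S.P (m+1) (S.mate m S.Wd) := by omega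
  have hac := S.after_cross hm hbef haft S.t (by omega) (le_refl _)
  have hpin := S.pinning hm hbef haft
  rw [hWt] at hac
  constructor
  · omega
  · omega

omit hWt hk1 hkn

lemma Ctx.Wmono_step {m : ℕ} (hm : m < S.t) : S.P (m+1) S.Wd ≤ S.P m S.Wd := by
  by_cases h : S.P (m+1) S.Wd = S.P m S.Wd
  · omega
  · have := (S.Wmove hm h).2.1; omega

lemma Ctx.Wmono {m1 : ℕ} : ∀ m2, m1 ≤ m2 → m2 ≤ S.t → S.P m2 S.Wd ≤ S.P m1 S.Wd := by
  intro m2 h12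
  induction m2, h12 using Nat.le_induction with
  | base => intro _; exact le_refl _
  | succ m2 hm2 ih =>
    intro h
    have := S.Wmono_step (show m2 < S.t by omega)
    have := ih (by omega)
    omega

include hWt hk1 hkn

/-- KEY: the partner of W's move at position p ends exactly at position p. -/
lemma Ctx.M3 : ∀ m, m < S.t → S.P (m+1) S.Wd ≠ S.P m S.Wd →
    S.P S.t (S.mate m S.Wd) = S.P m S.Wd := by
  classical
  set M := (Finset.range S.t).filter (fun m => S.P (m+1) S.Wd ≠ S.P m S.Wd) with hM
  have hmem : ∀ m ∈ M, m < S.t ∧ S.P (m+1) S.Wd ≠ S.P m S.Wd := by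
    intro m hm
    rw [hM, Finset.mem_filter, Finset.mem_range] at hm
    exact hm
  -- telescoping sum
  have tele : ∑ m ∈ Finset.range S.t, ((S.P m S.Wd : ℤ) - (S.P (m+1) S.Wd : ℤ))
      = (S.P 0 S.Wd : ℤ) - (S.P S.t S.Wd : ℤ) :=
    Finset.sum_range_sub' (fun m => (S.P m S.Wd : ℤ)) S.t
  have hfil : ∑ m ∈ M, ((S.P m S.Wd : ℤ) - (S.P (m+1) S.Wd : ℤ))
      = ∑ m ∈ Finset.range S.t, ((S.P m S.Wd : ℤ) - (S.P (m+1) S.Wd : ℤ)) := by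
    rw [hM]
    refine Finset.sum_filter_of_ne ?_
    intro m hm hne
    intro hcon
    apply hne
    rw [hcon]
    ring
  have termone : ∀ m ∈ M, ((S.P m S.Wd : ℤ) - (S.P (m+1) S.Wd : ℤ)) = 1 := by
    intro m hm
    obtain ⟨hmt, hmv⟩ := hmem m hm
    have := (S.Wmove hmt hmv).2.1
    omega
  have hWend : S.P S.t S.Wd = k - 1 := hWt
  have hW0 : S.P 0 S.Wd = n - 1 := S.W0
  have hcard : M.card = n - k := by
    have h1 : ∑ m ∈ M, ((S.P m S.Wd : ℤ) - (S.P (m+1) S.Wd : ℤ)) = (M.card : ℤ) := by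
      rw [Finset.sum_congr rfl termone]
      simp
    rw [hfil, tele, hW0, hWend] at h1
    have hn1 : (((n:ℕ) - 1 : ℕ) : ℤ) = (n : ℤ) - 1 := by
      have := S.hn; push_cast [Nat.cast_sub (by omega : 1 ≤ n)]; ring
    have hk1' : (((k:ℕ) - 1 : ℕ) : ℤ) = (k : ℤ) - 1 := by
      push_cast [Nat.cast_sub hk1]; ring
    rw [hn1, hk1'] at h1
    omega
  -- boundary positions bijection
  have hposge : ∀ m ∈ M, k ≤ S.P m S.Wd := by
    intro m hm
    obtain ⟨hmt, hmv⟩ := hmem m hm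
    have h2 := (S.Wmove hmt hmv).2.1
    have h3 := S.Wmono (m1 := m+1) S.t (by omega) (le_refl _)
    omega
  have hposle : ∀ m ∈ M, S.P m S.Wd ≤ n - 1 := by
    intro m hm
    have := S.P_lt m S.Wd
    omega
  have ginj : ∀ m1 ∈ M, ∀ m2 ∈ M, S.P m1 S.Wd = S.P m2 S.Wd → m1 = m2 := by
    intro m1 hm1 m2 hm2 heq
    obtain ⟨hm1t, hm1v⟩ := hmem m1 hm1
    obtain ⟨hm2t, hm2v⟩ := hmem m2 hm2
    rcases Nat.lt_trichotomy m1 m2 with h | h | h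
    · have := (S.Wmove hm1t hm1v).2.1
      have := S.Wmono (m1 := m1+1) m2 (by omega) (by omega)
      omega
    · exact h
    · have := (S.Wmove hm2t hm2v).2.1
      have := S.Wmono (m1 := m2+1) m1 (by omega) (by omega)
      omega
  have gim : M.image (fun m => S.P m S.Wd) = Finset.Icc k (n-1) := by
    apply Finset.eq_of_subset_of_card_le
    · intro j hj
      rw [Finset.mem_image] at hj
      obtain ⟨m, hm, rfl⟩ := hj
      rw [Finset.mem_Icc]
      exact ⟨hposge m hm, hposle m hm⟩
    · rw [Finset.card_image_of_injOn (fun m1 hm1 m2 hm2 h => ginj m1 hm1 m2 hm2 h), hcard,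
        Nat.card_Icc]
      omega
  -- partner map bijection onto right-enders
  set R := Finset.univ.filter (fun w : Fin n => k ≤ S.P S.t w) with hR
  have hRcard : R.card = n - k := by
    have hbij : R.card = (Finset.Ico k n).card := by
      apply Finset.card_bij (fun w _ => S.P S.t w)
      · intro w hw
        rw [hR, Finset.mem_filter] at hw
        rw [Finset.mem_Ico]
        exact ⟨hw.2, S.P_lt _ _⟩
      · intro w1 hw1 w2 hw2 h
        exact S.P_inj h
      · intro j hj
        rw [Finset.mem_Ico] at hj
        refine ⟨S.σ S.t ⟨j, hj.2⟩, ?_, ?_⟩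
        · rw [hR, Finset.mem_filter]
          refine ⟨Finset.mem_univ _, ?_⟩
          show k ≤ ((S.σ S.t)⁻¹ (S.σ S.t ⟨j, hj.2⟩)).val
          rw [← Equiv.Perm.mul_apply, inv_mul_cancel, Equiv.Perm.one_apply]
          exact hj.1
        · show ((S.σ S.t)⁻¹ (S.σ S.t ⟨j, hj.2⟩)).val = j
          rw [← Equiv.Perm.mul_apply, inv_mul_cancel, Equiv.Perm.one_apply]
    rw [hbij, Nat.card_Ico]
  have finj : ∀ m1 ∈ M, ∀ m2 ∈ M, S.mate m1 S.Wd = S.mate m2 S.Wd → m1 = m2 := by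
    intro m1 hm1 m2 hm2 heq
    obtain ⟨hm1t, hm1v⟩ := hmem m1 hm1
    obtain ⟨hm2t, hm2v⟩ := hmem m2 hm2
    by_contra hne
    rcases Nat.lt_or_ge m1 m2 with h | h
    · obtain ⟨w1, _, w3, w4, w5⟩ := S.Wmove hm1t hm1v
      have hac := S.after_cross hm1t w1 (by omega) m2 h (by omega)
      obtain ⟨v1, _, _, _, _⟩ := S.Wmove hm2t hm2v
      rw [← heq] at v1
      omega
    · have h' : m2 < m1 := by omega
      obtain ⟨w1, _, w3, w4, w5⟩ := S.Wmove hm2t hm2v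
      have hac := S.after_cross hm2t w1 (by omega) m1 h' (by omega)
      obtain ⟨v1, _, _, _, _⟩ := S.Wmove hm1t hm1v
      rw [heq] at v1
      omega
  have fim : M.image (fun m => S.mate m S.Wd) = R := by
    apply Finset.eq_of_subset_of_card_le
    · intro w hw
      rw [Finset.mem_image] at hw
      obtain ⟨m, hm, rfl⟩ := hw
      obtain ⟨hmt, hmv⟩ := hmem m hm
      rw [hR, Finset.mem_filter]
      exact ⟨Finset.mem_univ _, (S.Wpartner_final k hWt hk1 hkn hmt hmv).1⟩
    · rw [Finset.card_image_of_injOn (fun m1 hm1 m2 hm2 h => finj m1 hm1 m2 hm2 h), hcard, hRcard]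
  -- final-position map on R is injective with image Icc k (n-1)
  have hinjR : ∀ w1 ∈ R, ∀ w2 ∈ R, S.P S.t w1 = S.P S.t w2 → w1 = w2 := by
    intro w1 _ w2 _ h
    exact S.P_inj h
  have him : R.image (fun w => S.P S.t w) = Finset.Icc k (n-1) := by
    apply Finset.eq_of_subset_of_card_le
    · intro j hj
      rw [Finset.mem_image] at hj
      obtain ⟨w, hw, rfl⟩ := hj
      rw [hR, Finset.mem_filter] at hw
      rw [Finset.mem_Icc]
      have := S.P_lt S.t w
      exact ⟨hw.2, by omega⟩
    · rw [Finset.card_image_of_injOn (fun w1 hw1 w2 hw2 h => hinjR w1 hw1 w2 hw2 h), hRcard,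
        Nat.card_Icc]
      omega
  -- the two sums agree
  have sumA : ∑ m ∈ M, (S.P S.t (S.mate m S.Wd) : ℤ) = ∑ j ∈ Finset.Icc k (n-1), (j : ℤ) := by
    calc ∑ m ∈ M, (S.P S.t (S.mate m S.Wd) : ℤ)
        = ∑ w ∈ M.image (fun m => S.mate m S.Wd), (S.P S.t w : ℤ) := (Finset.sum_image (s := M) (g := fun m => S.mate m S.Wd) (f := fun w => (S.P S.t w : ℤ)) finj).symm
      _ = ∑ w ∈ R, (S.P S.t w : ℤ) := by rw [fim]
      _ = ∑ j ∈ R.image (fun w => S.P S.t w), (j : ℤ) := (Finset.sum_image (s := R) (g := fun w => S.P S.t w) (f := fun j : ℕ => (j : ℤ)) hinjR).symm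
      _ = ∑ j ∈ Finset.Icc k (n-1), (j : ℤ) := by rw [him]
  have sumB : ∑ m ∈ M, (S.P m S.Wd : ℤ) = ∑ j ∈ Finset.Icc k (n-1), (j : ℤ) := by
    calc ∑ m ∈ M, (S.P m S.Wd : ℤ)
        = ∑ j ∈ M.image (fun m => S.P m S.Wd), (j : ℤ) := (Finset.sum_image (s := M) (g := fun m => S.P m S.Wd) (f := fun j : ℕ => (j : ℤ)) ginj).symm
      _ = ∑ j ∈ Finset.Icc k (n-1), (j : ℤ) := by rw [gim]
  have hzero : ∑ m ∈ M, ((S.P S.t (S.mate m S.Wd) : ℤ) - (S.P m S.Wd : ℤ)) = 0 := by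
    rw [Finset.sum_sub_distrib, sumA, sumB]
    ring
  have hnonneg : ∀ m ∈ M, (0:ℤ) ≤ (S.P S.t (S.mate m S.Wd) : ℤ) - (S.P m S.Wd : ℤ) := by
    intro m hm
    obtain ⟨hmt, hmv⟩ := hmem m hm
    have := (S.Wpartner_final k hWt hk1 hkn hmt hmv).2
    omega
  have heach := (Finset.sum_eq_zero_iff_of_nonneg hnonneg).mp hzero
  intro m hmt hmv
  have hm : m ∈ M := by
    rw [hM, Finset.mem_filter, Finset.mem_range]
    exact ⟨hmt, hmv⟩
  have := heach m hm
  omega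

end Wall


/-- the object starting at position 0. -/
def Ctx.Zd (S : Ctx n) : Fin n := ⟨0, S.hn⟩

/-- no two objects both ending in positions ≥ k ever cross. -/
theorem Ctx.no_RR (S : Ctx n) (k : ℕ) (hk1 : 1 ≤ k) (hkn : k < n)
    (hZt : S.P S.t S.Zd = k) (hWt : S.P S.t S.Wd = k - 1) :
    ∀ x y : Fin n, S.P 0 x < S.P 0 y → k ≤ S.P S.t y → S.P S.t y < S.P S.t x → False := by
  have hWval : (S.Wd).val = n - 1 := rfl
  suffices H : ∀ d s, S.t ≤ s + d → ∀ x y : Fin n, k ≤ S.P S.t y → S.P S.t y < S.P S.t x →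
      s < S.t → S.P s x < S.P s y → S.P (s+1) y ≤ S.P (s+1) x → False by
    intro x y h0 hky hyx
    obtain ⟨s, hst, hev1, hev2⟩ := S.exists_cross h0 hyx
    exact H (S.t - s) s (by omega) x y hky hyx hst hev1 hev2
  intro d
  induction d with
  | zero => intro s hs x y _ _ hst _ _; omega
  | succ d ih =>
    intro s hs x y hky hyx hst hev1 hev2
    have hxy : x ≠ y := by intro h; rw [h] at hev1; omega
    obtain ⟨hc1, hc2, hc3, -, -⟩ := S.cross hst hev1 hev2
    have hbefore := S.before_cross hst hev1 hev2
    have hpin := S.pinning hst hev1 hev2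
    have h0xy : S.P 0 x < S.P 0 y := hbefore 0 (Nat.zero_le s)
    have hyZ : y ≠ S.Zd := by
      intro h
      have h1 : S.P 0 y = 0 := by rw [h, S.P0]; rfl
      omega
    have hky' : k + 1 ≤ S.P S.t y := by
      have : S.P S.t y ≠ k := fun h => hyZ (S.P_inj (h.trans hZt.symm))
      omega
    have hxW : x ≠ S.Wd := by
      intro h
      rw [h, hWt] at hyx
      omega
    have hyW : y ≠ S.Wd := by
      intro h
      rw [h, hWt] at hky'
      omega
    have hxvne : x.val ≠ n - 1 := fun h => hxW (Fin.ext (by rw [h, hWval]))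
    have hyvne : y.val ≠ n - 1 := fun h => hyW (Fin.ext (by rw [h, hWval]))
    have h0xW : S.P 0 x < S.P 0 S.Wd := by
      rw [S.P0, S.P0]
      have := x.isLt
      omega
    have h0yW : S.P 0 y < S.P 0 S.Wd := by
      rw [S.P0, S.P0]
      have := y.isLt
      omega
    have hWx : S.P S.t S.Wd < S.P S.t x := by rw [hWt]; omega
    have hWy : S.P S.t S.Wd < S.P S.t y := by rw [hWt]; omega
    obtain ⟨Tx, hTxlt, hTx1, hTx2⟩ := S.exists_cross h0xW hWx
    obtain ⟨d1, d2, d3, -, -⟩ := S.cross hTxlt hTx1 hTx2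
    have hWmovedx : S.P (Tx+1) S.Wd ≠ S.P Tx S.Wd := by omega
    have hmatex : S.mate Tx S.Wd = x := by
      apply S.P_inj (s := Tx)
      obtain ⟨e1, e2, e3⟩ := S.mate_pos hTxlt S.Wd hWmovedx
      omega
    have hM3x : S.P S.t x = S.P Tx S.Wd := by
      have := S.M3 k hWt hk1 hkn Tx hTxlt hWmovedx
      rw [hmatex] at this
      exact this
    obtain ⟨Ty, hTylt, hTy1, hTy2⟩ := S.exists_cross h0yW hWy
    obtain ⟨g1, g2, g3, -, -⟩ := S.cross hTylt hTy1 hTy2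
    have hWmovedy : S.P (Ty+1) S.Wd ≠ S.P Ty S.Wd := by omega
    have hmatey : S.mate Ty S.Wd = y := by
      apply S.P_inj (s := Ty)
      obtain ⟨e1, e2, e3⟩ := S.mate_pos hTylt S.Wd hWmovedy
      omega
    have hM3y : S.P S.t y = S.P Ty S.Wd := by
      have := S.M3 k hWt hk1 hkn Ty hTylt hWmovedy
      rw [hmatey] at this
      exact this
    have hTxy : Tx ≠ Ty := by
      intro h
      rw [h] at hM3x
      omega
    have hTxTy : Tx < Ty := by
      by_contra h
      push_neg at h
      have h' : Ty < Tx := by omega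
      have := S.Wmono (m1 := Ty + 1) Tx (by omega) (by omega)
      omega
    have hTxs : s < Tx := by
      rcases Nat.lt_trichotomy Tx s with h | h | h
      · exfalso
        have hbyW := S.before_cross hTylt hTy1 hTy2 (Tx+1) (by omega)
        have hbs := hbefore (Tx+1) (by omega)
        omega
      · exfalso
        subst h
        have hxmv : S.P (Tx+1) x ≠ S.P Tx x := by omega
        have hWdx : S.Wd = S.mate Tx x := S.movers hTxlt hxmv hWmovedx (Ne.symm hxW)
        obtain ⟨f1, f2, f3⟩ := S.mate_pos hTxlt x hxmv
        have : S.mate Tx x = y := by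
          apply S.P_inj (s := Tx)
          omega
        rw [this] at hWdx
        exact hyW hWdx.symm
      · exact h
    have hdrop : S.P Ty y < S.P (s+1) y := by omega
    obtain ⟨r, hr1, hr2, hr3⟩ := exists_dec (fun m => S.P m y) (s+1) Ty (by omega) hdrop
    have hrt : r < S.t := by omega
    have hymoved : S.P (r+1) y ≠ S.P r y := by omega
    obtain ⟨e1, e2, e3⟩ := S.mate_pos hrt y hymoved
    have hev1' : S.P r (S.mate r y) < S.P r y := by omega
    have hev2' : S.P (r+1) y ≤ S.P (r+1) (S.mate r y) := by omega
    have hfin : S.P S.t y < S.P S.t (S.mate r y) :=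
      S.after_cross hrt hev1' hev2' S.t (by omega) (le_refl _)
    exact ih r (by omega) (S.mate r y) y hky hfin hrt hev1' hev2'


lemma revPerm_mul_self : (Fin.revPerm : Equiv.Perm (Fin n)) * Fin.revPerm = 1 := by
  ext x
  simp [Equiv.Perm.mul_apply, Fin.rev_rev]

lemma revPerm_inv : (Fin.revPerm : Equiv.Perm (Fin n))⁻¹ = Fin.revPerm := by
  rw [eq_comm, eq_inv_iff_mul_eq_one, revPerm_mul_self]

/-- the left-right mirror of a context. -/
def Ctx.mirror (S : Ctx n) : Ctx n where
  hn := S.hn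
  u := fun q x => S.u (Fin.rev q) (Fin.rev x)
  t := S.t
  σ := fun s => Fin.revPerm * S.σ s * Fin.revPerm
  hu := fun q x y h => Fin.rev_injective (S.hu (Fin.rev q) h)
  hseq := by
    intro m hm
    obtain ⟨a, b, hadj, h1, h2, heq⟩ := S.hseq m hm
    have hswap : Fin.revPerm * Equiv.swap a b * Fin.revPerm
        = Equiv.swap (Fin.rev a) (Fin.rev b) := by
      have h := (Equiv.swap_apply_apply (Fin.revPerm : Equiv.Perm (Fin n)) a b).symm
      rw [revPerm_inv] at h
      simpa using h
    refine ⟨Fin.rev a, Fin.rev b, ?_, ?_, ?_, ?_⟩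
    · have ha := a.isLt
      have hb := b.isLt
      rcases hadj with h | h
      · right; simp only [Fin.val_rev]; omega
      · left; simp only [Fin.val_rev]; omega
    · show S.u (Fin.rev (Fin.rev a)) (Fin.rev ((Fin.revPerm * S.σ m * Fin.revPerm : Equiv.Perm (Fin n)) (Fin.rev b)))
        > S.u (Fin.rev (Fin.rev a)) (Fin.rev ((Fin.revPerm * S.σ m * Fin.revPerm : Equiv.Perm (Fin n)) (Fin.rev a)))
      simpa [Equiv.Perm.mul_apply, Fin.rev_rev] using h1
    · show S.u (Fin.rev (Fin.rev b)) (Fin.rev ((Fin.revPerm * S.σ m * Fin.revPerm : Equiv.Perm (Fin n)) (Fin.rev a)))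
        > S.u (Fin.rev (Fin.rev b)) (Fin.rev ((Fin.revPerm * S.σ m * Fin.revPerm : Equiv.Perm (Fin n)) (Fin.rev b)))
      simpa [Equiv.Perm.mul_apply, Fin.rev_rev] using h2
    · show Fin.revPerm * S.σ (m+1) * Fin.revPerm
        = Fin.revPerm * S.σ m * Fin.revPerm * Equiv.swap (Fin.rev a) (Fin.rev b)
      rw [heq, ← hswap]
      have : Fin.revPerm * S.σ m * Fin.revPerm * (Fin.revPerm * Equiv.swap a b * Fin.revPerm)
          = Fin.revPerm * (S.σ m * ((Fin.revPerm * Fin.revPerm) * Equiv.swap a b)) * Fin.revPerm := by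
        group
      rw [this, revPerm_mul_self, one_mul]
  h0 := by
    show Fin.revPerm * S.σ 0 * Fin.revPerm = 1
    rw [S.h0, mul_one, revPerm_mul_self]

lemma Ctx.mirror_P (S : Ctx n) (s : ℕ) (x : Fin n) :
    (S.mirror).P s x = n - 1 - S.P s (Fin.rev x) := by
  show (((Fin.revPerm * S.σ s * Fin.revPerm : Equiv.Perm (Fin n)))⁻¹ x).val = _
  have : (Fin.revPerm * S.σ s * Fin.revPerm : Equiv.Perm (Fin n))⁻¹
      = Fin.revPerm * (S.σ s)⁻¹ * Fin.revPerm := by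
    rw [mul_inv_rev, mul_inv_rev, revPerm_inv]
    group
  rw [this]
  show ((Fin.rev ((S.σ s)⁻¹ (Fin.rev x)))).val = n - 1 - S.P s (Fin.rev x)
  rw [Fin.val_rev]
  have : S.P s (Fin.rev x) = ((S.σ s)⁻¹ (Fin.rev x)).val := rfl
  omega

lemma Ctx.mirror_t (S : Ctx n) : (S.mirror).t = S.t := rfl

/-- no two objects both ending in positions ≤ k-1 ever cross. -/
theorem Ctx.no_LL (S : Ctx n) (k : ℕ) (hk1 : 1 ≤ k) (hkn : k < n)
    (hZt : S.P S.t S.Zd = k) (hWt : S.P S.t S.Wd = k - 1) :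
    ∀ x y : Fin n, S.P 0 x < S.P 0 y → S.P S.t x ≤ k - 1 → S.P S.t y < S.P S.t x → False := by
  intro x y h0 hxk hyx
  have hrevZ : Fin.rev (S.mirror.Zd) = S.Wd := by
    apply Fin.ext
    rw [Fin.val_rev]
    show n - (0 + 1) = n - 1
    omega
  have hrevW : Fin.rev (S.mirror.Wd) = S.Zd := by
    apply Fin.ext
    rw [Fin.val_rev]
    show n - ((n-1) + 1) = 0
    omega
  have hZ' : S.mirror.P S.mirror.t (S.mirror.Zd) = n - k := by
    rw [Ctx.mirror_t, Ctx.mirror_P, hrevZ, hWt]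
    omega
  have hW' : S.mirror.P S.mirror.t (S.mirror.Wd) = (n - k) - 1 := by
    rw [Ctx.mirror_t, Ctx.mirror_P, hrevW, hZt]
    omega
  have b1 := S.P_lt 0 x
  have b2 := S.P_lt 0 y
  have b3 := S.P_lt S.t x
  have b4 := S.P_lt S.t y
  apply S.mirror.no_RR (n - k) (by omega) (by omega) hZ' hW' (Fin.rev y) (Fin.rev x)
  · rw [Ctx.mirror_P, Ctx.mirror_P, Fin.rev_rev, Fin.rev_rev]
    omega
  · rw [Ctx.mirror_t, Ctx.mirror_P, Fin.rev_rev]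
    omega
  · rw [Ctx.mirror_t, Ctx.mirror_P, Ctx.mirror_P, Fin.rev_rev, Fin.rev_rev]
    omega


lemma card_val_lt (c : ℕ) (hc : c ≤ n) :
    (Finset.univ.filter fun p : Fin n => p.val < c).card = c := by
  have : (Finset.univ.filter fun p : Fin n => p.val < c).card = (Finset.range c).card := by
    apply Finset.card_bij (fun p _ => p.val)
    · intro p hp
      rw [Finset.mem_filter] at hp
      rw [Finset.mem_range]
      exact hp.2
    · intro p1 _ p2 _ h
      exact Fin.ext h
    · intro j hj
      rw [Finset.mem_range] at hj
      refine ⟨⟨j, by omega⟩, ?_, rfl⟩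
      rw [Finset.mem_filter]
      exact ⟨Finset.mem_univ _, hj⟩
  rw [this, Finset.card_range]

lemma card_val_Ico (c1 c2 : ℕ) (hc2 : c2 ≤ n) :
    (Finset.univ.filter fun p : Fin n => c1 ≤ p.val ∧ p.val < c2).card = c2 - c1 := by
  have : (Finset.univ.filter fun p : Fin n => c1 ≤ p.val ∧ p.val < c2).card
      = (Finset.Ico c1 c2).card := by
    apply Finset.card_bij (fun p _ => p.val)
    · intro p hp
      rw [Finset.mem_filter] at hp
      rw [Finset.mem_Ico]
      exact hp.2
    · intro p1 _ p2 _ h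
      exact Fin.ext h
    · intro j hj
      rw [Finset.mem_Ico] at hj
      refine ⟨⟨j, by omega⟩, ?_, rfl⟩
      rw [Finset.mem_filter]
      exact ⟨Finset.mem_univ _, hj⟩
  rw [this, Nat.card_Ico]

lemma Ctx.card_P_filter (S : Ctx n) (s : ℕ) (Q : ℕ → Prop) [DecidablePred Q] :
    (Finset.univ.filter fun z : Fin n => Q (S.P s z)).card
      = (Finset.univ.filter fun p : Fin n => Q p.val).card := by
  apply Finset.card_bij (fun z _ => (S.σ s)⁻¹ z)
  · intro z hz
    rw [Finset.mem_filter] at hz ⊢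
    exact ⟨Finset.mem_univ _, hz.2⟩
  · intro z1 _ z2 _ h
    exact (S.σ s)⁻¹.injective h
  · intro p hp
    rw [Finset.mem_filter] at hp
    refine ⟨S.σ s p, ?_, ?_⟩
    · rw [Finset.mem_filter]
      refine ⟨Finset.mem_univ _, ?_⟩
      show Q (((S.σ s)⁻¹ (S.σ s p)).val)
      rw [← Equiv.Perm.mul_apply, inv_mul_cancel, Equiv.Perm.one_apply]
      exact hp.2
    · rw [← Equiv.Perm.mul_apply, inv_mul_cancel, Equiv.Perm.one_apply]

end CSP

/-- 0-indexed; the paper's `c = a'+b'-k+1` in 1-indexed positions equals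
`a'+b'+1-k` 0-indexed: in the same setting as the crossing lemma, every agent `q` with
`max(a,b') ≤ q < c` strictly prefers `o_b` to `o_a`, and every agent `q` with
`c ≤ q ≤ min(a',b)` strictly prefers `o_a` to `o_b`. -/
theorem crossing_swap_preferences {n : ℕ} (hn : 0 < n)
    (u : Fin n → Fin n → ℕ) (hu : StrictPref u)
    (t : ℕ) (σseq : ℕ → Assignment n) (h0 : σseq 0 = 1)
    (hseq : SwapSeq pathAdj u σseq t)
    (k : ℕ) (hk1 : 1 ≤ k) (hkn : k < n)
    (hK : (((σseq t)⁻¹) ⟨0, hn⟩).val = k)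
    (hK1 : (((σseq t)⁻¹) ⟨n - 1, by omega⟩).val = k - 1)
    (a b : Fin n) (hab : a.val < b.val)
    (ha : a.val < (((σseq t)⁻¹) a).val) (hb : (((σseq t)⁻¹) b).val < b.val)
    (hQ : (Set.Icc a.val (((σseq t)⁻¹) a).val ∩
            Set.Icc (((σseq t)⁻¹) b).val b.val).Nonempty) :
    let a' : ℕ := (((σseq t)⁻¹) a).val
    let b' : ℕ := (((σseq t)⁻¹) b).val
    let c : ℤ := (a' : ℤ) + b' + 1 - k
    (∀ q : Fin n, max a.val b' ≤ q.val → (q.val : ℤ) < c → u q b > u q a) ∧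
    (∀ q : Fin n, c ≤ (q.val : ℤ) → q.val ≤ min a' b.val → u q a > u q b) := by
  intro a' b' c
  have ha'def : a' = ((σseq t)⁻¹ a).val := rfl
  have hb'def : b' = ((σseq t)⁻¹ b).val := rfl
  have hcdef : c = (a' : ℤ) + b' + 1 - k := rfl
  classical
  set S : CSP.Ctx n := ⟨hn, u, t, σseq, hu, hseq, h0⟩ with hS
  have hPa : S.P S.t a = a' := rfl
  have hPb : S.P S.t b = b' := rfl
  have hZt : S.P S.t S.Zd = k := hK
  have hWt : S.P S.t S.Wd = k - 1 := hK1
  have hne_ab : a ≠ b := fun h => by rw [h] at hab; omega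
  -- trajectories intersect ⟹ b' ≤ a', and distinct ⟹ b' < a'
  obtain ⟨q0, hq0⟩ := hQ
  rw [Set.mem_inter_iff, Set.mem_Icc, Set.mem_Icc] at hq0
  have hb'a' : S.P S.t b < S.P S.t a := by
    rw [hPa, hPb]
    have hne : b' ≠ a' := fun h => hne_ab (S.P_inj (s := S.t) (by rw [hPa, hPb, h])).symm
    omega
  -- positions at time 0
  have h0a : S.P 0 a = a.val := S.P0 a
  have h0b : S.P 0 b = b.val := S.P0 b
  have h0ab : S.P 0 a < S.P 0 b := by omega
  -- straddle the wall
  have hstr1 : S.P S.t b ≤ k - 1 := by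
    by_contra hcon
    push_neg at hcon
    exact S.no_RR k hk1 hkn hZt hWt a b h0ab (by omega) hb'a'
  have hstr2 : k ≤ S.P S.t a := by
    by_contra hcon
    push_neg at hcon
    exact S.no_LL k hk1 hkn hZt hWt a b h0ab (by omega) hb'a'
  -- the unique crossing of a and b
  obtain ⟨s, hslt, hev1, hev2⟩ := S.exists_cross h0ab hb'a'
  obtain ⟨hc1, hc2, hc3, -, -⟩ := S.cross hslt hev1 hev2
  have hpin := S.pinning hslt hev1 hev2
  -- side classification at time s
  have hside : ∀ z : Fin n, z ≠ a → z ≠ b →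
      (S.P s z < S.P s a ↔
        (S.P S.t z < S.P S.t b ∨ (k ≤ S.P S.t z ∧ S.P S.t z < S.P S.t a))) := by
    intro z hza hzb
    have hz_ne_a : S.P S.t z ≠ S.P S.t a := fun h => hza (S.P_inj h)
    have hz_ne_b : S.P S.t z ≠ S.P S.t b := fun h => hzb (S.P_inj h)
    have hz0a : S.P 0 z ≠ S.P 0 a := fun h => hza (S.P_inj h)
    have hz0b : S.P 0 z ≠ S.P 0 b := fun h => hzb (S.P_inj h)
    have hzsa : S.P s z ≠ S.P s a := fun h => hza (S.P_inj h)
    have hzsb : S.P s z ≠ S.P s b := fun h => hzb (S.P_inj h)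
    rcases Nat.lt_or_ge (S.P S.t z) k with hzk | hzk
    · rcases Nat.lt_or_ge (S.P S.t z) (S.P S.t b) with hzb' | hzb'
      · have h0zb : S.P 0 z < S.P 0 b := by
          by_contra hcon
          push_neg at hcon
          exact S.no_LL k hk1 hkn hZt hWt b z (by omega) hstr1 hzb'
        have hconst := S.order_const h0zb hzb' s (by omega)
        constructor
        · intro _; exact Or.inl hzb'
        · intro _; omega
      · have hzb'' : S.P S.t b < S.P S.t z := by omega
        have h0bz : S.P 0 b < S.P 0 z := by
          by_contra hcon
          push_neg at hcon
          exact S.no_LL k hk1 hkn hZt hWt z b (by omega) (by omega) hzb''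
        have hconst := S.order_const h0bz hzb'' s (by omega)
        constructor
        · intro hl; omega
        · intro hr; omega
    · rcases Nat.lt_or_ge (S.P S.t z) (S.P S.t a) with hza' | hza'
      · have h0za : S.P 0 z < S.P 0 a := by
          by_contra hcon
          push_neg at hcon
          exact S.no_RR k hk1 hkn hZt hWt a z (by omega) hzk hza'
        have hconst := S.order_const h0za hza' s (by omega)
        constructor
        · intro _; exact Or.inr ⟨hzk, hza'⟩
        · intro _; exact hconst
      · have hza'' : S.P S.t a < S.P S.t z := by omega
        have h0az : S.P 0 a < S.P 0 z := by
          by_contra hcon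
          push_neg at hcon
          exact S.no_RR k hk1 hkn hZt hWt z a (by omega) hstr2 hza''
        have hconst := S.order_const h0az hza'' s (by omega)
        constructor
        · intro hl; omega
        · intro hr; omega
  -- counting: the crossing position equals a' + b' - k
  have hsets : (Finset.univ.filter fun z : Fin n => S.P s z < S.P s a)
      = (Finset.univ.filter fun z : Fin n =>
          S.P S.t z < S.P S.t b ∨ (k ≤ S.P S.t z ∧ S.P S.t z < S.P S.t a)) := by
    apply Finset.ext
    intro z
    rw [Finset.mem_filter, Finset.mem_filter]
    rcases eq_or_ne z a with rfl | hza
    · constructor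
      · intro h; omega
      · intro h
        exfalso
        rcases h.2 with h' | h'
        · omega
        · omega
    rcases eq_or_ne z b with rfl | hzb
    · constructor
      · intro h; omega
      · intro h
        exfalso
        rcases h.2 with h' | h'
        · omega
        · omega
    · have := hside z hza hzb
      constructor
      · intro h; exact ⟨h.1, this.mp h.2⟩
      · intro h; exact ⟨h.1, this.mpr h.2⟩
  have hcount1 : (Finset.univ.filter fun z : Fin n => S.P s z < S.P s a).card = S.P s a := by
    rw [S.card_P_filter s (fun v => v < S.P s a)]
    exact CSP.card_val_lt _ (le_of_lt (by simpa using S.P_lt s a))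
  have hcount2 : (Finset.univ.filter fun z : Fin n =>
      S.P S.t z < S.P S.t b ∨ (k ≤ S.P S.t z ∧ S.P S.t z < S.P S.t a)).card
      = S.P S.t b + (S.P S.t a - k) := by
    rw [S.card_P_filter S.t (fun v => v < S.P S.t b ∨ (k ≤ v ∧ v < S.P S.t a))]
    rw [Finset.filter_or, Finset.card_union_of_disjoint]
    · rw [CSP.card_val_lt _ (le_of_lt (by simpa using S.P_lt S.t b)),
        CSP.card_val_Ico _ _ (le_of_lt (by simpa using S.P_lt S.t a))]
    · rw [Finset.disjoint_left]
      intro p hp1 hp2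
      rw [Finset.mem_filter] at hp1 hp2
      omega
  have hπ : S.P s a = S.P S.t b + (S.P S.t a - k) := by
    rw [← hcount1, hsets, hcount2]
  -- final preferences
  constructor
  · intro q hq1 hq2
    have hq2' : q.val ≤ S.P s a := by
      rw [hcdef] at hq2
      rw [hPa, hPb] at hπ
      rw [hPa] at hstr2
      omega
    have hq1' : a.val ≤ q.val ∧ b' ≤ q.val := by
      constructor <;> omega
    obtain ⟨r1, hr11, hr12, hr13⟩ := S.ivtU (Nat.zero_le s) (by omega) a
      (h := q.val) (by omega) hq2'
    obtain ⟨r2, hr21, hr22, hr23⟩ := S.ivtD (show s+1 ≤ S.t by omega) (le_refl _) b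
      (h := q.val) (by omega) (by omega)
    have hagents : (S.σ r1)⁻¹ a = (S.σ r2)⁻¹ b := S.agents_eq (by omega)
    have hlt := S.hold_lt (show r1 ≤ r2 by omega) (by omega) hne_ab hagents
    have hqeq : (S.σ r2)⁻¹ b = q := Fin.ext hr23
    rw [hqeq] at hlt
    exact hlt
  · intro q hq1 hq2
    have hq1' : S.P s a + 1 ≤ q.val := by
      rw [hcdef] at hq1
      rw [hPa, hPb] at hπ
      rw [hPa] at hstr2
      omega
    obtain ⟨r1, hr11, hr12, hr13⟩ := S.ivtD (Nat.zero_le s) (by omega) b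
      (h := q.val) (by omega) (by omega)
    obtain ⟨r2, hr21, hr22, hr23⟩ := S.ivtU (show s+1 ≤ S.t by omega) (le_refl _) a
      (h := q.val) (by omega) (by omega)
    have hagents : (S.σ r1)⁻¹ b = (S.σ r2)⁻¹ a := S.agents_eq (by omega)
    have hlt := S.hold_lt (show r1 ≤ r2 by omega) (by omega) (Ne.symm hne_ab) hagents
    have hqeq : (S.σ r2)⁻¹ a = q := Fin.ext hr23
    rw [hqeq] at hlt
    exact hlt
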